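/- Let H ∈ ℝ^{ξ×ξ}, δ > 0, and let η ≥ 2 be an integer such that ‖H‖_∞ δ / (η + 2) < 1, and set Φ = (‖H‖_∞ δ)^{η+1} / ((η+1)!) · 1/(1 − ‖H‖_∞ δ/(η+2)). Then for every t ∈ [0, δ] there exist real numbers τ_i ∈ [(i^{−i/(i−1)} − i^{−1/(i−1)}) δ^i, 0] for i = 2, …, η and a matrix E ∈ ℝ^{ξ×ξ} with |E_{jk}| ≤ Φ for all j, k, such that exp(H t) − I − (t/δ)(exp(H δ) − I) = Σ_{i=2}^η τ_i H^i / i! + E. -/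

import Mathlib

open Matrix Set

/-- Matrix exponential of a real square matrix. -/
noncomputable def mexp {m : ℕ} (A : Matrix (Fin m) (Fin m) ℝ) : Matrix (Fin m) (Fin m) ℝ :=
  NormedSpace.exp A

/-- Maximum absolute row sum norm (`‖·‖_∞`) of a matrix. -/
noncomputable def rowSumNorm {m : ℕ} (H : Matrix (Fin m) (Fin m) ℝ) : ℝ :=
  ⨆ i, ∑ j, |H i j|

/-- Lower endpoint `(i^{−i/(i−1)} − i^{−1/(i−1)}) δ^i` of the correction interval. -/
noncomputable def tauLo (i : ℕ) (δ : ℝ) : ℝ :=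
  ((i : ℝ) ^ (-(i : ℝ) / ((i : ℝ) - 1)) - (i : ℝ) ^ (-(1 : ℝ) / ((i : ℝ) - 1))) * δ ^ i

/-- Tangent-line bound giving the range of `s^i - s` on `[0,1]`. -/
lemma stmt6_key_ineq (i : ℕ) (hi : 2 ≤ i) (s : ℝ) (h0 : 0 ≤ s) (h1 : s ≤ 1) :
    (i : ℝ) ^ (-(i : ℝ) / ((i : ℝ) - 1)) - (i : ℝ) ^ (-(1 : ℝ) / ((i : ℝ) - 1)) ≤ s ^ i - s
      ∧ s ^ i - s ≤ 0 := by
  have hi1 : (1 : ℝ) < (i : ℝ) := by exact_mod_cast hi.trans' (by norm_num)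
  have hipos : (0 : ℝ) < i := by linarith
  set a : ℝ := (i : ℝ) ^ (-(1 : ℝ) / ((i : ℝ) - 1)) with ha_def
  have ha_pos : 0 < a := Real.rpow_pos_of_pos hipos _
  have ha1 : a ≤ 1 :=
    Real.rpow_le_one_of_one_le_of_nonpos hi1.le
      (div_nonpos_of_nonpos_of_nonneg (by norm_num) (by linarith))
  have hcast : ((i - 1 : ℕ) : ℝ) = (i : ℝ) - 1 := by
    rw [Nat.cast_sub (by omega)]; norm_num
  have hpow1 : a ^ (i - 1) = ((i : ℝ))⁻¹ := by
    rw [ha_def, ← Real.rpow_natCast _ (i - 1), ← Real.rpow_mul hipos.le, hcast]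
    rw [div_mul_cancel₀ _ (by linarith : (i : ℝ) - 1 ≠ 0)]
    exact Real.rpow_neg_one _
  have hpowi : a ^ i = (i : ℝ) ^ (-(i : ℝ) / ((i : ℝ) - 1)) := by
    rw [ha_def, ← Real.rpow_natCast _ i, ← Real.rpow_mul hipos.le]
    ring_nf
  have hgeom : (∑ k ∈ Finset.range i, s ^ k * a ^ (i - 1 - k)) * (s - a) = s ^ i - a ^ i :=
    geom_sum₂_mul s a i
  have htang : s - a ≤ s ^ i - a ^ i := by
    rcases le_total a s with hc | hc
    · have hsum : (1 : ℝ) ≤ ∑ k ∈ Finset.range i, s ^ k * a ^ (i - 1 - k) := by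
        have hterm : ∀ k ∈ Finset.range i, a ^ (i - 1) ≤ s ^ k * a ^ (i - 1 - k) := by
          intro k hk
          rw [Finset.mem_range] at hk
          have hsplit : a ^ (i - 1) = a ^ k * a ^ (i - 1 - k) := by
            rw [← pow_add]; congr 1; omega
          rw [hsplit]
          exact mul_le_mul_of_nonneg_right (pow_le_pow_left₀ ha_pos.le hc k) (by positivity)
        calc (1 : ℝ) = i * a ^ (i - 1) := by rw [hpow1]; field_simp
          _ ≤ _ := by
              simpa using Finset.card_nsmul_le_sum (Finset.range i) _ _ hterm
      nlinarith [sub_nonneg.2 hc]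
    · have hsum : (∑ k ∈ Finset.range i, s ^ k * a ^ (i - 1 - k)) ≤ 1 := by
        have hterm : ∀ k ∈ Finset.range i, s ^ k * a ^ (i - 1 - k) ≤ a ^ (i - 1) := by
          intro k hk
          rw [Finset.mem_range] at hk
          have hsplit : a ^ (i - 1) = a ^ k * a ^ (i - 1 - k) := by
            rw [← pow_add]; congr 1; omega
          rw [hsplit]
          exact mul_le_mul_of_nonneg_right (pow_le_pow_left₀ h0 hc k) (by positivity)
        calc (∑ k ∈ Finset.range i, s ^ k * a ^ (i - 1 - k)) ≤ i * a ^ (i - 1) := by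
              simpa using Finset.sum_le_card_nsmul (Finset.range i) _ _ hterm
          _ = 1 := by rw [hpow1]; field_simp
      nlinarith [sub_nonpos.2 hc]
  constructor
  · rw [← hpowi]; linarith
  · have : s ^ i ≤ s := pow_le_of_le_one h0 h1 (by omega)
    linarith

section Aux

attribute [local instance] Matrix.linftyOpNormedRing Matrix.linftyOpNormedAlgebra

variable {ξ : ℕ}

lemma stmt6_rowSumNorm_eq (H : Matrix (Fin ξ) (Fin ξ) ℝ) : rowSumNorm H = ‖H‖ := by
  rw [rowSumNorm, Matrix.linfty_opNorm_def]
  have key : ∀ i : Fin ξ, ∑ j, |H i j| = ((∑ j, ‖H i j‖₊ : NNReal) : ℝ) := by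
    intro i; simp [NNReal.coe_sum, Real.norm_eq_abs]
  rcases isEmpty_or_nonempty (Fin ξ) with h | h
  · simp [Finset.univ_eq_empty, ciSup_of_empty]
  · apply le_antisymm
    · refine ciSup_le fun i => ?_
      rw [key i]
      exact_mod_cast Finset.le_sup (f := fun i => ∑ l, ‖H i l‖₊) (Finset.mem_univ i)
    · obtain ⟨i0, -, hi0⟩ := Finset.exists_mem_eq_sup Finset.univ Finset.univ_nonempty
        (fun i : Fin ξ => ∑ j, ‖H i j‖₊)
      rw [hi0, ← key i0]
      exact le_ciSup (f := fun i : Fin ξ => ∑ j, |H i j|)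
        (Set.Finite.bddAbove (Set.finite_range _)) i0

lemma stmt6_abs_entry_le (A : Matrix (Fin ξ) (Fin ξ) ℝ) (j k : Fin ξ) : |A j k| ≤ ‖A‖ := by
  rw [Matrix.linfty_opNorm_def]
  calc |A j k| ≤ ∑ l, |A j l| :=
        Finset.single_le_sum (f := fun l => |A j l|) (fun _ _ => abs_nonneg _) (Finset.mem_univ k)
    _ ≤ _ := by
        have h := Finset.le_sup (f := fun i => ∑ l, ‖A i l‖₊) (Finset.mem_univ j)
        have h2 := NNReal.coe_le_coe.2 h
        simpa [NNReal.coe_sum, Real.norm_eq_abs, abs_nonneg] using h2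

lemma stmt6_mexp_eq_tsum (H : Matrix (Fin ξ) (Fin ξ) ℝ) (s : ℝ) :
    mexp (s • H) = ∑' n : ℕ, (s ^ n * ((n.factorial : ℝ))⁻¹) • H ^ n := by
  rw [mexp]
  simp only [NormedSpace.exp_eq_tsum ℝ]
  exact tsum_congr fun n => by rw [smul_pow, smul_smul, mul_comm]

lemma stmt6_g_summable (H : Matrix (Fin ξ) (Fin ξ) ℝ) (s : ℝ) :
    Summable (fun n : ℕ => (s ^ n * ((n.factorial : ℝ))⁻¹) • H ^ n) := by
  refine (NormedSpace.expSeries_summable' (𝕂 := ℝ) (s • H)).congr fun n => ?_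
  rw [smul_pow, smul_smul, mul_comm]

end Aux

/-- Correction matrix `𝓕`: for `t ∈ [0, δ]` the matrix
`exp(H t) − I − (t/δ)(exp(H δ) − I)` can be written as `Σ_{i=2}^η τᵢ Hⁱ/i! + E` with
`τᵢ ∈ [(i^{−i/(i−1)} − i^{−1/(i−1)}) δⁱ, 0]` and `|E_{jk}| ≤ Φ`. -/
theorem stmt6 {ξ : ℕ} (H : Matrix (Fin ξ) (Fin ξ) ℝ) (δ : ℝ) (hδ : 0 < δ)
    (η : ℕ) (hη : 2 ≤ η) (hsmall : rowSumNorm H * δ / ((η : ℝ) + 2) < 1)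
    (Φ : ℝ)
    (hΦ : Φ = (rowSumNorm H * δ) ^ (η + 1) / ((Nat.factorial (η + 1) : ℝ))
        * (1 / (1 - rowSumNorm H * δ / ((η : ℝ) + 2))))
    (t : ℝ) (ht : t ∈ Set.Icc 0 δ) :
    ∃ (τ : ℕ → ℝ) (E : Matrix (Fin ξ) (Fin ξ) ℝ),
      (∀ i ∈ Finset.Icc 2 η, τ i ∈ Set.Icc (tauLo i δ) 0) ∧
      (∀ j k, |E j k| ≤ Φ) ∧
      mexp (t • H) - 1 - (t / δ) • (mexp (δ • H) - 1) =
        ∑ i ∈ Finset.Icc 2 η, (τ i / (Nat.factorial i : ℝ)) • H ^ i + E := by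
  letI : NormedRing (Matrix (Fin ξ) (Fin ξ) ℝ) := Matrix.linftyOpNormedRing
  letI : NormedAlgebra ℝ (Matrix (Fin ξ) (Fin ξ) ℝ) := Matrix.linftyOpNormedAlgebra
  obtain ⟨ht0, htδ⟩ := ht
  have hδ0 : δ ≠ 0 := ne_of_gt hδ
  have hnorm : rowSumNorm H = ‖H‖ := stmt6_rowSumNorm_eq H
  set r : ℝ := ‖H‖ with hr
  set τ : ℕ → ℝ := fun i => t ^ i - t * δ ^ (i - 1) with hτdef
  -- τ membership
  have hτmem : ∀ i ∈ Finset.Icc 2 η, τ i ∈ Set.Icc (tauLo i δ) 0 := by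
    intro i hi
    rw [Finset.mem_Icc] at hi
    set s : ℝ := t / δ with hs
    have hs0 : 0 ≤ s := div_nonneg ht0 hδ.le
    have hs1 : s ≤ 1 := (div_le_one hδ).2 htδ
    have hts : t = s * δ := by rw [hs, div_mul_cancel₀ t hδ0]
    obtain ⟨hlo, hhi⟩ := stmt6_key_ineq i hi.1 s hs0 hs1
    have hδi : (0:ℝ) < δ ^ i := pow_pos hδ i
    have h2 : δ ^ (i - 1) * δ = δ ^ i := by
      rw [← pow_succ]; congr 1; omega
    have hexpand : τ i = (s ^ i - s) * δ ^ i := by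
      calc τ i = s ^ i * δ ^ i - s * (δ ^ (i - 1) * δ) := by rw [hτdef]; simp only; rw [hts, mul_pow]; ring
        _ = (s ^ i - s) * δ ^ i := by rw [h2]; ring
    constructor
    · rw [hexpand, tauLo]
      exact mul_le_mul_of_nonneg_right hlo hδi.le
    · rw [hexpand]
      exact mul_nonpos_of_nonpos_of_nonneg hhi hδi.le
  -- the series
  set g : ℝ → ℕ → Matrix (Fin ξ) (Fin ξ) ℝ :=
    fun s n => (s ^ n * ((n.factorial : ℝ))⁻¹) • H ^ n with hg
  have hgsum : ∀ s : ℝ, Summable (g s) := fun s => stmt6_g_summable H s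
  have hsplit : ∀ s : ℝ, mexp (s • H) - 1 = ∑' n : ℕ, g s (n + 1) := by
    intro s
    rw [stmt6_mexp_eq_tsum H s]
    rw [show (∑' n : ℕ, (s ^ n * ((n.factorial : ℝ))⁻¹) • H ^ n) = ∑' n : ℕ, g s n from rfl]
    rw [Summable.tsum_eq_zero_add (hgsum s)]
    have : g s 0 = 1 := by simp [hg]
    rw [this, add_sub_cancel_left]
  set F : ℕ → Matrix (Fin ξ) (Fin ξ) ℝ :=
    fun n => ((t ^ (n + 1) - t * δ ^ n) * (((n + 1).factorial : ℝ))⁻¹) • H ^ (n + 1) with hF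
  have hFeq : ∀ n : ℕ, g t (n + 1) - (t / δ) • g δ (n + 1) = F n := by
    intro n
    simp only [hg, hF, smul_smul]
    rw [← sub_smul]
    congr 1
    field_simp
    ring
  have hS1 : Summable (fun n : ℕ => g t (n + 1)) := (summable_nat_add_iff 1).2 (hgsum t)
  have hS2 : Summable (fun n : ℕ => (t / δ) • g δ (n + 1)) :=
    ((summable_nat_add_iff 1).2 (hgsum δ)).const_smul _
  have hFsum : Summable F := (hS1.sub hS2).congr hFeq
  have hLHS : mexp (t • H) - 1 - (t / δ) • (mexp (δ • H) - 1) = ∑' n : ℕ, F n := by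
    rw [hsplit t, hsplit δ, ← tsum_const_smul'' (t / δ), ← Summable.tsum_sub hS1 hS2]
    exact tsum_congr hFeq
  refine ⟨τ, ∑' n : ℕ, F (n + η), hτmem, ?_, ?_⟩
  · -- entry bound on E
    intro j k
    have hr0 : 0 ≤ r := norm_nonneg H
    set q : ℝ := r * δ / ((η : ℝ) + 2) with hq
    have hq0 : 0 ≤ q := by positivity
    have hq1 : q < 1 := by rw [hq, ← hnorm]; exact hsmall
    set u : ℕ → ℝ := fun n => (r * δ) ^ (η + 1) / ((η + 1).factorial : ℝ) * q ^ n with hu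
    have hFle : ∀ n : ℕ, ‖F (n + η)‖ ≤ u n := by
      intro n
      set m : ℕ := n + η with hm
      have habs : |t ^ (m + 1) - t * δ ^ m| ≤ δ ^ (m + 1) := by
        have h1 : t ^ (m + 1) ≤ δ ^ (m + 1) := pow_le_pow_left₀ ht0 htδ _
        have h2 : 0 ≤ t ^ (m + 1) := pow_nonneg ht0 _
        have h3 : t * δ ^ m ≤ δ ^ (m + 1) := by
          rw [pow_succ']; exact mul_le_mul_of_nonneg_right htδ (pow_nonneg hδ.le m)
        have h4 : 0 ≤ t * δ ^ m := mul_nonneg ht0 (pow_nonneg hδ.le m)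
        rw [abs_le]; constructor <;> nlinarith
      have hHpow : ‖H ^ (m + 1)‖ ≤ r ^ (m + 1) := norm_pow_le' H (Nat.succ_pos m)
      have step1 : ‖F m‖ ≤ (r * δ) ^ (m + 1) / ((m + 1).factorial : ℝ) := by
        rw [hF]
        simp only
        rw [norm_smul]
        have : ‖(t ^ (m + 1) - t * δ ^ m) * (((m + 1).factorial : ℝ))⁻¹‖
            = |t ^ (m + 1) - t * δ ^ m| * (((m + 1).factorial : ℝ))⁻¹ := by
          rw [Real.norm_eq_abs, abs_mul, abs_of_nonneg (inv_nonneg.2 (Nat.cast_nonneg _) : (0:ℝ) ≤ (((m + 1).factorial : ℝ))⁻¹)]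
        rw [this]
        calc |t ^ (m + 1) - t * δ ^ m| * (((m + 1).factorial : ℝ))⁻¹ * ‖H ^ (m + 1)‖
            ≤ δ ^ (m + 1) * (((m + 1).factorial : ℝ))⁻¹ * r ^ (m + 1) := by
              have hfac : (0:ℝ) ≤ (((m + 1).factorial : ℝ))⁻¹ :=
                inv_nonneg.2 (Nat.cast_nonneg _)
              apply mul_le_mul
              · exact mul_le_mul_of_nonneg_right habs hfac
              · exact hHpow
              · exact norm_nonneg _
              · exact mul_nonneg (pow_nonneg hδ.le _) hfac
          _ = (r * δ) ^ (m + 1) / ((m + 1).factorial : ℝ) := by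
              rw [mul_pow]; ring
      have step2 : (r * δ) ^ (m + 1) / ((m + 1).factorial : ℝ) ≤ u n := by
        have hkey : ((η + 1).factorial : ℝ) * ((η : ℝ) + 2) ^ n ≤ ((m + 1).factorial : ℝ) := by
          have hc : ((η + 1).factorial * (η + 1 + 1) ^ n : ℕ) ≤ ((η + 1 + n).factorial : ℕ) :=
            @Nat.factorial_mul_pow_le_factorial (η + 1) n
          have := Nat.cast_le (α := ℝ) |>.2 hc
          push_cast at this
          calc ((η + 1).factorial : ℝ) * ((η : ℝ) + 2) ^ n
              = ((η + 1).factorial : ℝ) * ((η : ℝ) + 1 + 1) ^ n := by ring_nf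
            _ ≤ ((η + 1 + n).factorial : ℝ) := this
            _ = ((m + 1).factorial : ℝ) := by congr 2; omega
        have hexp : (r * δ) ^ (m + 1) = (r * δ) ^ (η + 1) * (r * δ) ^ n := by
          rw [← pow_add]; congr 1; omega
        have hq_pow : q ^ n = (r * δ) ^ n / ((η : ℝ) + 2) ^ n := by
          rw [hq, div_pow]
        rw [hu]
        simp only
        rw [hexp, hq_pow]
        rw [div_mul_div_comm]
        have hXnn : (0:ℝ) ≤ (r * δ) ^ (η + 1) * (r * δ) ^ n :=
          mul_nonneg (pow_nonneg (mul_nonneg hr0 hδ.le) _) (pow_nonneg (mul_nonneg hr0 hδ.le) _)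
        have hden : (0:ℝ) < ((η + 1).factorial : ℝ) * ((η : ℝ) + 2) ^ n :=
          mul_pos (by exact_mod_cast Nat.factorial_pos (η+1)) (pow_pos (by positivity) n)
        exact div_le_div_of_nonneg_left hXnn hden hkey
      exact step1.trans step2
    have hu_sum : Summable u := (summable_geometric_of_lt_one hq0 hq1).mul_left _
    have hFn_sum : Summable (fun n => ‖F (n + η)‖) :=
      Summable.of_nonneg_of_le (fun n => norm_nonneg _) hFle hu_sum
    calc |(∑' n : ℕ, F (n + η)) j k| ≤ ‖∑' n : ℕ, F (n + η)‖ := stmt6_abs_entry_le _ j k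
      _ ≤ ∑' n : ℕ, ‖F (n + η)‖ := norm_tsum_le_tsum_norm hFn_sum
      _ ≤ ∑' n : ℕ, u n := Summable.tsum_le_tsum hFle hFn_sum hu_sum
      _ = Φ := by
          rw [hu]
          rw [tsum_mul_left, tsum_geometric_of_lt_one hq0 hq1, hΦ, hnorm, hq, one_div]
  · -- the equation
    rw [hLHS, ← Summable.sum_add_tsum_nat_add η hFsum]
    congr 1
    -- finite sum equality
    set G : ℕ → Matrix (Fin ξ) (Fin ξ) ℝ :=
      fun i => (τ i / (Nat.factorial i : ℝ)) • H ^ i with hG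
    have hFG : ∀ n : ℕ, F n = G (n + 1) := by
      intro n
      simp only [hF, hG, hτdef, div_eq_mul_inv, Nat.add_sub_cancel]
    have h1 : ∑ n ∈ Finset.range η, F n = ∑ i ∈ Finset.Icc 1 η, G i := by
      rw [show Finset.Icc 1 η = Finset.Ico 1 (η + 1) from (Finset.Ico_add_one_right_eq_Icc 1 η).symm]
      rw [Finset.sum_Ico_eq_sum_range]
      simp only [Nat.add_sub_cancel]
      exact Finset.sum_congr rfl fun n _ => by rw [hFG n, add_comm]
    have h2 : Finset.Icc 1 η = insert 1 (Finset.Icc 2 η) := by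
      ext x; simp only [Finset.mem_Icc, Finset.mem_insert]; omega
    have hG1 : G 1 = 0 := by
      simp [hG, hτdef]
    rw [h1, h2, Finset.sum_insert (by simp), hG1, zero_add]
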